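/- If the greedy algorithm on a matroid, run with orders τ and τ' differing by an adjacent swap of elements u (earlier in τ) and v, produces bases x and x', and u ∉ x, then x = x'. -/

import Mathlib

open Classical in
/-- The greedy algorithm on a matroid: process elements in the order of the list, adding
each element whenever independence is preserved. -/
noncomputable def matroidGreedy {α : Type*} (M : Matroid α) (l : List α) : Set α :=
  l.foldl (fun s e => if M.Indep (insert e s) then insert e s else s) ∅

open Classical in
lemma matroidGreedy_subset_foldl {α : Type*} (M : Matroid α) :
    ∀ (l : List α) (s : Set α),
      s ⊆ l.foldl (fun s e => if M.Indep (insert e s) then insert e s else s) s := by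
  intro l
  induction l with
  | nil => intro s; simp
  | cons a l ih =>
    intro s
    refine subset_trans ?_ (ih _)
    by_cases h : M.Indep (insert a s) <;> simp [h, Set.subset_insert]

open Classical in
/-- if the greedy algorithm, run with orders `τ` and `τ'` differing by an
adjacent swap of `u` (earlier in `τ`) and `v`, produces bases `x` and `x'`, and `u ∉ x`,
then `x = x'`. -/
theorem greedy_adjacent_swap_eq_of_earlier_not_mem
    {α : Type*} [Fintype α] (M : Matroid α)
    (τ τ' : List α) (hnd : τ.Nodup) (hfull : ∀ a : α, a ∈ τ)
    (u v : α)
    (hswap : ∃ l₁ l₂ : List α, τ = l₁ ++ u :: v :: l₂ ∧ τ' = l₁ ++ v :: u :: l₂)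
    (x x' : Set α) (hx : x = matroidGreedy M τ) (hx' : x' = matroidGreedy M τ')
    (hu : u ∉ x) :
    x = x' := by
  obtain ⟨l₁, l₂, hτ, hτ'⟩ := hswap
  set f : Set α → α → Set α := fun s e => if M.Indep (insert e s) then insert e s else s
    with hf
  set s : Set α := l₁.foldl f ∅ with hs
  have hx2 : x = l₂.foldl f (f (f s u) v) := by
    rw [hx, matroidGreedy, hτ, List.foldl_append, List.foldl_cons, List.foldl_cons]
  have hx'2 : x' = l₂.foldl f (f (f s v) u) := by
    rw [hx', matroidGreedy, hτ', List.foldl_append, List.foldl_cons, List.foldl_cons]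
  -- u was not added at its step in τ
  have hnind : ¬ M.Indep (insert u s) := by
    intro hind
    apply hu
    rw [hx2]
    apply matroidGreedy_subset_foldl M l₂
    have h1 : f s u = insert u s := by simp [hf, hind]
    have h2 : u ∈ f s u := by rw [h1]; exact Set.mem_insert _ _
    have h3 : f s u ⊆ f (f s u) v := by
      by_cases h : M.Indep (insert v (f s u))
      · have e : f (f s u) v = insert v (f s u) := if_pos h
        rw [e]; exact Set.subset_insert _ _
      · have e : f (f s u) v = f s u := if_neg h
        rw [e]
    exact h3 h2
  have hfu : f s u = s := by simp [hf, hnind]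
  have key : f (f s u) v = f (f s v) u := by
    rw [hfu]
    by_cases hv : M.Indep (insert v s)
    · have hfv : f s v = insert v s := by simp [hf, hv]
      have : ¬ M.Indep (insert u (insert v s)) := by
        intro h
        exact hnind (h.subset (Set.insert_subset_insert (Set.subset_insert _ _)))
      rw [hfv]
      simp [hf, hv, this]
    · have hfv : f s v = s := by simp [hf, hv]
      rw [hfv, hfu]
  rw [hx2, hx'2, key]
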